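/- Let G = [A M; N B] and G' = [A' M'; N' B'] be generalized matrix algebras over a commutative ring R with 1/2 ∈ R, and let l : G → G' be a Lie isomorphism. Suppose that (1) every commuting trace of an arbitrary R-bilinear map on G' is proper; (2) at least one of A, B is noncommutative and at least one of A', B' is noncommutative; and (3) M' is loyal. Then l = m + n, where m : G → G' is an injective algebra homomorphism or the negative of an injective algebra anti-homomorphism, and n : G → Z(G') is an R-linear map with n([x, y]) = 0 for all x, y ∈ G. Moreover, if Z(G') = R·1, then m is surjective. -/

import Mathlib

/-- A realization of the `R`-algebra `G` as a generalized matrix algebra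
`[A M; N B]` arising from a Morita context `(A, B, M, N, Φ, Ψ)`:
`G` decomposes `R`-linearly as `A ⊕ M ⊕ N ⊕ B` (via the injections `ιA, ιM, ιN, ιB`
and the projections `pA, pM, pN, pB`), and multiplication in `G` follows the
matrix-like multiplication rules.  The bimodule actions of `A` and `B` on `M` and `N`
and the pairings `Φ : M ⊗ N → A`, `Ψ : N ⊗ M → B` are recovered from the
multiplication of `G`; the requirement that the corresponding products land in the
appropriate corner is expressed by the `mul_*` fields.  The standing assumption that
`M` is faithful as a left `A`-module and as a right `B`-module is included. -/
structure GMA (R A B M N G : Type*) [CommRing R]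
    [Ring A] [Algebra R A] [Ring B] [Algebra R B]
    [AddCommGroup M] [Module R M] [AddCommGroup N] [Module R N]
    [Ring G] [Algebra R G] where
  ιA : A →ₗ[R] G
  ιB : B →ₗ[R] G
  ιM : M →ₗ[R] G
  ιN : N →ₗ[R] G
  pA : G →ₗ[R] A
  pB : G →ₗ[R] B
  pM : G →ₗ[R] M
  pN : G →ₗ[R] N
  decomp : ∀ g : G, g = ιA (pA g) + ιM (pM g) + ιN (pN g) + ιB (pB g)
  pA_ιA : ∀ a, pA (ιA a) = a
  pA_ιM : ∀ m, pA (ιM m) = 0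
  pA_ιN : ∀ n, pA (ιN n) = 0
  pA_ιB : ∀ b, pA (ιB b) = 0
  pM_ιA : ∀ a, pM (ιA a) = 0
  pM_ιM : ∀ m, pM (ιM m) = m
  pM_ιN : ∀ n, pM (ιN n) = 0
  pM_ιB : ∀ b, pM (ιB b) = 0
  pN_ιA : ∀ a, pN (ιA a) = 0
  pN_ιM : ∀ m, pN (ιM m) = 0
  pN_ιN : ∀ n, pN (ιN n) = n
  pN_ιB : ∀ b, pN (ιB b) = 0
  pB_ιA : ∀ a, pB (ιA a) = 0
  pB_ιM : ∀ m, pB (ιM m) = 0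
  pB_ιN : ∀ n, pB (ιN n) = 0
  pB_ιB : ∀ b, pB (ιB b) = b
  one_def : (1 : G) = ιA 1 + ιB 1
  mul_AA : ∀ a a', ιA a * ιA a' = ιA (a * a')
  mul_BB : ∀ b b', ιB b * ιB b' = ιB (b * b')
  mul_AM : ∀ a m, ιA a * ιM m ∈ LinearMap.range ιM
  mul_MB : ∀ m b, ιM m * ιB b ∈ LinearMap.range ιM
  mul_BN : ∀ b n, ιB b * ιN n ∈ LinearMap.range ιN
  mul_NA : ∀ n a, ιN n * ιA a ∈ LinearMap.range ιN
  mul_MN : ∀ m n, ιM m * ιN n ∈ LinearMap.range ιA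
  mul_NM : ∀ n m, ιN n * ιM m ∈ LinearMap.range ιB
  mul_AB : ∀ a b, ιA a * ιB b = 0
  mul_BA : ∀ b a, ιB b * ιA a = 0
  mul_AN : ∀ a n, ιA a * ιN n = 0
  mul_NB : ∀ n b, ιN n * ιB b = 0
  mul_MA : ∀ m a, ιM m * ιA a = 0
  mul_BM : ∀ b m, ιB b * ιM m = 0
  mul_MM : ∀ m m', ιM m * ιM m' = 0
  mul_NN : ∀ n n', ιN n * ιN n' = 0
  faithful_left : ∀ a : A, (∀ m : M, ιA a * ιM m = 0) → a = 0
  faithful_right : ∀ b : B, (∀ m : M, ιM m * ιB b = 0) → b = 0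


section Helpers

/-- central element commutation helpers -/
lemma cmul {G : Type*} [Ring G] {c : G} (hc : c ∈ Subring.center G) (a : G) :
    a * c = c * a := Subring.mem_center_iff.1 hc a

lemma cswap {G : Type*} [Ring G] {c : G} (hc : c ∈ Subring.center G) (a b : G) :
    a * (c * b) = c * (a * b) := by
  rw [← mul_assoc, cmul hc a, mul_assoc]

lemma csmul {R G : Type*} [CommRing R] [Ring G] [Algebra R G] {c : G}
    (hc : c ∈ Subring.center G) (r : R) : r • c ∈ Subring.center G := by
  rw [Subring.mem_center_iff] at *
  intro g; rw [mul_smul_comm, smul_mul_assoc, hc g]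

variable {R A B M N G : Type*} [CommRing R]
    [Ring A] [Algebra R A] [Ring B] [Algebra R B]
    [AddCommGroup M] [Module R M] [AddCommGroup N] [Module R N]
    [Ring G] [Algebra R G]

namespace GMA

variable (h : GMA R A B M N G)

lemma nA1 (n : N) : h.ιN n * h.ιA 1 = h.ιN n := by
  have h1 : h.ιN n * (1:G) = h.ιN n := mul_one _
  rw [h.one_def, mul_add, h.mul_NB] at h1
  simpa using h1

lemma a1M (m : M) : h.ιA 1 * h.ιM m = h.ιM m := by
  have h1 : (1:G) * h.ιM m = h.ιM m := one_mul _
  rw [h.one_def, add_mul, h.mul_BM] at h1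
  simpa using h1

lemma central_pM {g : G} (hg : g ∈ Subring.center G) : h.pM g = 0 ∧ h.pN g = 0 := by
  have hd := h.decomp g
  have h1 : g * h.ιA 1 = h.ιA (h.pA g) + h.ιN (h.pN g) := by
    conv_lhs => rw [hd]
    rw [add_mul, add_mul, add_mul, h.mul_AA, h.mul_MA, h.mul_BA, h.nA1, mul_one]
    abel
  have h2 : h.ιA 1 * g = h.ιA (h.pA g) + h.ιM (h.pM g) := by
    conv_lhs => rw [hd]
    rw [mul_add, mul_add, mul_add, h.mul_AA, h.mul_AN, h.mul_AB, h.a1M, one_mul]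
    abel
  have h3 : h.ιA (h.pA g) + h.ιN (h.pN g) = h.ιA (h.pA g) + h.ιM (h.pM g) := by
    rw [← h1, ← h2, cmul hg]
  have h4 : h.ιN (h.pN g) = h.ιM (h.pM g) := by
    exact add_left_cancel h3
  constructor
  · have := congrArg h.pM h4
    rw [h.pM_ιN, h.pM_ιM] at this; exact this.symm
  · have := congrArg h.pN h4
    rw [h.pN_ιN, h.pN_ιM] at this; exact this

lemma central_decomp {g : G} (hg : g ∈ Subring.center G) :
    g = h.ιA (h.pA g) + h.ιB (h.pB g) := by
  have hd := h.decomp g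
  obtain ⟨h1, h2⟩ := h.central_pM hg
  rw [h1, h2] at hd
  simpa using hd

lemma central_pair {g : G} (hg : g ∈ Subring.center G) (m : M) :
    h.ιA (h.pA g) * h.ιM m = h.ιM m * h.ιB (h.pB g) := by
  have h1 : g * h.ιM m = h.ιM m * g := (cmul hg _).symm
  conv_lhs at h1 => rw [h.central_decomp hg]
  conv_rhs at h1 => rw [h.central_decomp hg]
  rw [add_mul, h.mul_BM, mul_add, h.mul_MA] at h1
  simpa using h1

lemma central_mul_ιA {g : G} (hg : g ∈ Subring.center G) (c : A) :
    g * h.ιA c = h.ιA (h.pA g * c) := by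
  conv_lhs => rw [h.central_decomp hg]
  rw [add_mul, h.mul_AA, h.mul_BA, add_zero]

lemma central_mul_ιB {g : G} (hg : g ∈ Subring.center G) (c : B) :
    g * h.ιB c = h.ιB (h.pB g * c) := by
  conv_lhs => rw [h.central_decomp hg]
  rw [add_mul, h.mul_BB, h.mul_AB, zero_add]

lemma central_mul_ιM {g : G} (hg : g ∈ Subring.center G) (m : M) :
    g * h.ιM m = h.ιA (h.pA g) * h.ιM m := by
  conv_lhs => rw [h.central_decomp hg]
  rw [add_mul, h.mul_BM, add_zero]

lemma central_mul_ιM_eq {g : G} (hg : g ∈ Subring.center G) (m : M) :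
    g * h.ιM m = h.ιM (h.pM (g * h.ιM m)) := by
  rw [h.central_mul_ιM hg]
  obtain ⟨k, hk⟩ := h.mul_AM (h.pA g) m
  rw [← hk, h.pM_ιM]

lemma central_eq_zero_of_pA {g : G} (hg : g ∈ Subring.center G) (ha : h.pA g = 0) :
    g = 0 := by
  have hb : h.pB g = 0 := by
    apply h.faithful_right
    intro m
    rw [← h.central_pair hg m, ha, map_zero, zero_mul]
  rw [h.central_decomp hg, ha, hb, map_zero, map_zero, add_zero]

lemma central_eq_zero_of_pB {g : G} (hg : g ∈ Subring.center G) (hb : h.pB g = 0) :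
    g = 0 := by
  have ha : h.pA g = 0 := by
    apply h.faithful_left
    intro m
    rw [h.central_pair hg m, hb, map_zero, mul_zero]
  rw [h.central_decomp hg, ha, hb, map_zero, map_zero, add_zero]

lemma pM_central {g : G} (hg : g ∈ Subring.center G) : h.pM g = 0 := (h.central_pM hg).1

lemma pM_central_mul_ιA {g : G} (hg : g ∈ Subring.center G) (c : A) :
    h.pM (g * h.ιA c) = 0 := by rw [h.central_mul_ιA hg, h.pM_ιA]

lemma pM_central_mul_ιB {g : G} (hg : g ∈ Subring.center G) (c : B) :
    h.pM (g * h.ιB c) = 0 := by rw [h.central_mul_ιB hg, h.pM_ιB]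

end GMA
end Helpers

section Loyal
variable {R A B M N G : Type*} [CommRing R]
    [Ring A] [Algebra R A] [Ring B] [Algebra R B]
    [AddCommGroup M] [Module R M] [AddCommGroup N] [Module R N]
    [Ring G] [Algebra R G]
    (h : GMA R A B M N G)
    (h3 : ∀ (a : A) (b : B), (∀ m : M, h.ιA a * h.ιM m * h.ιB b = 0) → a = 0 ∨ b = 0)

include h3

/-- anti-torsion on the A-corner -/
lemma antitorA {z : G} (hz : z ∈ Subring.center G) (hzne : z ≠ 0) {c : A}
    (hc : z * h.ιA c = 0) : c = 0 := by
  have hac : h.pA z * c = 0 := by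
    have := h.central_mul_ιA hz c
    rw [hc] at this
    have := congrArg h.pA this
    rw [map_zero, h.pA_ιA] at this; exact this.symm
  have hbne : h.pB z ≠ 0 := fun hb => hzne (h.central_eq_zero_of_pB hz hb)
  have hmain : ∀ m : M, h.ιA c * h.ιM m * h.ιB (h.pB z) = 0 := by
    intro m
    have h1 : h.ιA c * h.ιM m * h.ιB (h.pB z) = h.ιA (h.pA z) * (h.ιA c * h.ιM m) := by
      obtain ⟨k, hk⟩ := h.mul_AM c m
      rw [← hk, ← h.central_pair hz k]
    rw [h1, ← mul_assoc, h.mul_AA, hac, map_zero, zero_mul]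
  rcases h3 c (h.pB z) hmain with hc0 | hb0
  · exact hc0
  · exact absurd hb0 hbne

/-- anti-torsion on the B-corner -/
lemma antitorB {z : G} (hz : z ∈ Subring.center G) (hzne : z ≠ 0) {c : B}
    (hc : z * h.ιB c = 0) : c = 0 := by
  have hbc : h.pB z * c = 0 := by
    have := h.central_mul_ιB hz c
    rw [hc] at this
    have := congrArg h.pB this
    rw [map_zero, h.pB_ιB] at this; exact this.symm
  have hane : h.pA z ≠ 0 := fun ha => hzne (h.central_eq_zero_of_pA hz ha)
  have hmain : ∀ m : M, h.ιA (h.pA z) * h.ιM m * h.ιB c = 0 := by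
    intro m
    rw [h.central_pair hz m, mul_assoc, h.mul_BB, hbc, map_zero, mul_zero]
  rcases h3 (h.pA z) c hmain with ha0 | hc0
  · exact absurd ha0 hane
  · exact hc0

/-- the center is a domain -/
lemma cdomain {z z' : G} (hz : z ∈ Subring.center G) (hz' : z' ∈ Subring.center G)
    (hzz : z * z' = 0) : z = 0 ∨ z' = 0 := by
  by_cases h0 : z = 0
  · exact Or.inl h0
  · right
    have h1 : z * h.ιA (h.pA z') = 0 := by
      rw [h.central_mul_ιA hz]
      have h2 : z * z' = z * h.ιA (h.pA z') + z * h.ιB (h.pB z') := by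
        conv_lhs => rw [h.central_decomp hz', mul_add]
      rw [h.central_mul_ιA hz, h.central_mul_ιB hz] at h2
      rw [hzz] at h2
      have h4 := congrArg h.pA h2.symm
      rw [map_zero, map_add, h.pA_ιA, h.pA_ιB, add_zero] at h4
      rw [h4, map_zero]
    have := antitorA h h3 hz h0 h1
    exact h.central_eq_zero_of_pA hz' this

/-- corner annihilation lemma, A side -/
lemma annA {z : G} (hz : z ∈ Subring.center G) (hzne : z ≠ 0) {c : A}
    (hall : ∀ m : M, z * (h.ιA c * h.ιM m) = 0) : c = 0 := by
  have h1 : h.pA z * c = 0 := by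
    apply h.faithful_left
    intro m
    have h2 := hall m
    rw [← mul_assoc, h.central_mul_ιA hz] at h2
    exact h2
  apply antitorA h h3 hz hzne
  rw [h.central_mul_ιA hz, h1, map_zero]

/-- corner annihilation lemma, B side -/
lemma annB {z : G} (hz : z ∈ Subring.center G) (hzne : z ≠ 0) {c : B}
    (hall : ∀ m : M, z * (h.ιM m * h.ιB c) = 0) : c = 0 := by
  have h1 : h.pB z * c = 0 := by
    apply h.faithful_right
    intro m
    have h2 := hall m
    rw [← mul_assoc, h.central_mul_ιM hz, h.central_pair hz, mul_assoc, h.mul_BB] at h2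
    exact h2
  apply antitorB h h3 hz hzne
  rw [h.central_mul_ιB hz, h1, map_zero]

end Loyal

lemma affine_comm {G : Type*} [Ring G] (Wm : G) {c₁ c₂ x₁ x₂ : G}
    (h₁ : c₁ ∈ Subring.center G) (h₂ : c₂ ∈ Subring.center G)
    (h₃ : x₁ ∈ Subring.center G) (h₄ : x₂ ∈ Subring.center G) :
    (c₁*Wm + x₁)*(c₂*Wm + x₂) = (c₂*Wm + x₂)*(c₁*Wm + x₁) := by
  have hcc : ∀ {c : G}, c ∈ Subring.center G → ∀ g, Commute c g :=
    fun hc g => (Subring.mem_center_iff.1 hc g).symm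
  refine Commute.add_left (Commute.add_right ?_ ?_) (Commute.add_right ?_ ?_)
  · exact Commute.mul_right ((hcc h₂ _).symm) (Commute.mul_left (hcc h₁ _) (Commute.refl Wm))
  · exact (hcc h₄ _).symm
  · exact hcc h₃ _
  · exact hcc h₃ _

lemma commutator_add_central {G : Type*} [Ring G] (a b : G) {x y : G}
    (hx : x ∈ Subring.center G) (hy : y ∈ Subring.center G) :
    (a+x)*(b+y) - (b+y)*(a+x) = a*b - b*a := by
  simp only [mul_add, add_mul]
  rw [cmul hy a, cmul hx b, cmul hy x]
  abel


/-- **Proposition 4.2.**  Let `G = [A M; N B]` and `G' = [A' M'; N' B']` be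
generalized matrix algebras over a commutative ring `R` with `1/2 ∈ R` and let
`l : G → G'` be a Lie isomorphism.  If
(1) every commuting trace of an arbitrary `R`-bilinear map on `G'` is proper,
(2) at least one of `A`, `B` and at least one of `A'`, `B'` is noncommutative, and
(3) `M'` is loyal,
then `l = m + n`, where `m : G → G'` is an injective homomorphism or the negative of
an injective anti-homomorphism and `n : G → Z(G')` is a linear map vanishing on each
commutator.  Moreover, if `G'` is central over `R`, then `m` is surjective. -/
theorem stmt13 (R A B M N G A' B' M' N' G' : Type*) [CommRing R]
    [Invertible (2 : R)]
    [Ring A] [Algebra R A] [Ring B] [Algebra R B]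
    [AddCommGroup M] [Module R M] [AddCommGroup N] [Module R N]
    [Ring G] [Algebra R G]
    [Ring A'] [Algebra R A'] [Ring B'] [Algebra R B']
    [AddCommGroup M'] [Module R M'] [AddCommGroup N'] [Module R N']
    [Ring G'] [Algebra R G']
    (h : GMA R A B M N G) (h' : GMA R A' B' M' N' G')
    (hMN : (∃ m : M, m ≠ 0) ∨ (∃ n : N, n ≠ 0))
    (hMN' : (∃ m : M', m ≠ 0) ∨ (∃ n : N', n ≠ 0))
    (l : G ≃ₗ[R] G')
    (hLie : ∀ x y : G, l (x * y - y * x) = l x * l y - l y * l x)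
    (h1 : ∀ q : G' →ₗ[R] G' →ₗ[R] G', (∀ x : G', q x x * x = x * q x x) →
            ∃ z ∈ Subring.center G', ∃ μ : G' →ₗ[R] G',
              (∀ x, μ x ∈ Subring.center G') ∧
              ∃ p : G' →ₗ[R] G' →ₗ[R] G', (∀ x y, p x y ∈ Subring.center G') ∧
                ∀ x : G', q x x = z * x ^ 2 + μ x * x + p x x)
    (h2 : (∃ a a' : A, a * a' ≠ a' * a) ∨ (∃ b b' : B, b * b' ≠ b' * b))
    (h2' : (∃ a a' : A', a * a' ≠ a' * a) ∨ (∃ b b' : B', b * b' ≠ b' * b))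
    (h3 : ∀ (a : A') (b : B'),
            (∀ m : M', h'.ιA a * h'.ιM m * h'.ιB b = 0) → a = 0 ∨ b = 0) :
    ∃ m : G →ₗ[R] G', ∃ nm : G →ₗ[R] G',
      (∀ x : G, l x = m x + nm x) ∧
      Function.Injective m ∧
      ((∀ x y : G, m (x * y) = m x * m y) ∨ (∀ x y : G, m (x * y) = -(m y * m x))) ∧
      (∀ x : G, nm x ∈ Subring.center G') ∧
      (∀ x y : G, nm (x * y - y * x) = 0) ∧
      ((Subring.center G' : Set G') = Set.range (algebraMap R G') →
        Function.Surjective m) := by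
  classical
  -- a corner pair witnessing noncommutativity of G' robust against central torsion
  obtain ⟨g₁, g₂, hcp⟩ : ∃ g₁ g₂ : G', ∀ zc ∈ Subring.center G',
      zc * (g₁ * g₂ - g₂ * g₁) = 0 → zc = 0 := by
    rcases h2' with ⟨a, a', hne⟩ | ⟨b, b', hne⟩
    · refine ⟨h'.ιA a, h'.ιA a', ?_⟩
      intro zc hzc h0
      by_contra hzcne
      rw [h'.mul_AA, h'.mul_AA, ← map_sub] at h0
      have := antitorA h' h3 hzc hzcne h0
      exact hne (by rwa [sub_eq_zero] at this)
    · refine ⟨h'.ιB b, h'.ιB b', ?_⟩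
      intro zc hzc h0
      by_contra hzcne
      rw [h'.mul_BB, h'.mul_BB, ← map_sub] at h0
      have := antitorB h' h3 hzc hzcne h0
      exact hne (by rwa [sub_eq_zero] at this)
  -- the bilinear map q
  obtain ⟨q, hqapp⟩ : ∃ q : G' →ₗ[R] G' →ₗ[R] G',
      ∀ x y, q x y = l (l.symm x * l.symm y) :=
    ⟨LinearMap.mk₂ R (fun x y => l (l.symm x * l.symm y))
      (fun x x' y => by rw [map_add, add_mul, map_add])
      (fun r x y => by rw [map_smul, smul_mul_assoc, map_smul])
      (fun x y y' => by rw [map_add, mul_add, map_add])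
      (fun r x y => by rw [map_smul, mul_smul_comm, map_smul]),
     fun x y => rfl⟩
  have hcommut : ∀ x : G', q x x * x = x * q x x := by
    intro x
    have h0 := hLie (l.symm x * l.symm x) (l.symm x)
    rw [mul_assoc, sub_self, map_zero, l.apply_symm_apply] at h0
    have h1 := h0.symm
    rw [sub_eq_zero] at h1
    rw [hqapp]
    exact h1
  obtain ⟨z, hzZ, μ, hμZ, p, hpZ, hq⟩ := h1 q hcommut
  -- polarization
  have hpol : ∀ x y : G', q x y + q y x
      = z*(x*y) + z*(y*x) + μ x*y + μ y*x + (p x y + p y x) := by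
    intro x y
    have h0 := hq (x + y)
    have hadd : q (x+y) (x+y) = q x x + (q x y + q y x) + q y y := by
      simp only [map_add, LinearMap.add_apply]
      abel
    rw [hadd, hq x, hq y] at h0
    have h2 : q x y + q y x = z*(x+y)^2 + μ (x+y)*(x+y) + p (x+y) (x+y)
        - (z*x^2 + μ x*x + p x x) - (z*y^2 + μ y*y + p y y) := by
      rw [← h0]; abel
    rw [h2]
    simp only [sq, map_add, LinearMap.add_apply, mul_add, add_mul]
    abel
  have hsub : ∀ x y : G', q x y - q y x = x*y - y*x := by
    intro x y
    have h0 := hLie (l.symm x) (l.symm y)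
    rw [map_sub, l.apply_symm_apply, l.apply_symm_apply] at h0
    rw [hqapp, hqapp]
    exact h0
  -- the coefficients
  obtain ⟨lam, hlam2, hlamZ⟩ : ∃ lam : G' → G',
      (∀ x, (2:R) • lam x = μ x) ∧ (∀ x, lam x ∈ Subring.center G') :=
    ⟨fun x => (⅟2:R) • μ x, fun x => smul_invOf_smul _ _, fun x => csmul (hμZ x) _⟩
  obtain ⟨gam, hgam2, hgamZ⟩ : ∃ gam : G' → G' → G',
      (∀ x y, (2:R) • gam x y = p x y + p y x) ∧ (∀ x y, gam x y ∈ Subring.center G') :=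
    ⟨fun x y => (⅟2:R) • (p x y + p y x), fun x y => smul_invOf_smul _ _,
     fun x y => csmul (Subring.add_mem _ (hpZ x y) (hpZ y x)) _⟩
  obtain ⟨α, h2α, hαZ⟩ : ∃ α : G', (2:R) • α = z + 1 ∧ α ∈ Subring.center G' :=
    ⟨(⅟2:R) • (z + 1), smul_invOf_smul _ _, csmul (Subring.add_mem _ hzZ (Subring.one_mem _)) _⟩
  obtain ⟨β, h2β, hβZ⟩ : ∃ β : G', (2:R) • β = z - 1 ∧ β ∈ Subring.center G' :=
    ⟨(⅟2:R) • (z - 1), smul_invOf_smul _ _, csmul (Subring.sub_mem _ hzZ (Subring.one_mem _)) _⟩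
  -- the product formula
  have hpi : ∀ x y : G', q x y = α*(x*y) + β*(y*x) + lam x*y + lam y*x + gam x y := by
    intro x y
    have h2q : (2:R) • q x y = (q x y + q y x) + (q x y - q y x) := by
      rw [two_smul]; abel
    rw [hpol, hsub] at h2q
    have hT : (2:R) • (α*(x*y) + β*(y*x) + lam x*y + lam y*x + gam x y)
        = (z*(x*y) + z*(y*x) + μ x*y + μ y*x + (p x y + p y x)) + (x*y - y*x) := by
      have e1 : (2:R)•(α*(x*y)) = z*(x*y) + x*y := by
        rw [← smul_mul_assoc, h2α, add_mul, one_mul]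
      have e2 : (2:R)•(β*(y*x)) = z*(y*x) - y*x := by
        rw [← smul_mul_assoc, h2β, sub_mul, one_mul]
      have e3 : (2:R)•(lam x*y) = μ x*y := by rw [← smul_mul_assoc, hlam2]
      have e4 : (2:R)•(lam y*x) = μ y*x := by rw [← smul_mul_assoc, hlam2]
      simp only [smul_add, e1, e2, e3, e4, hgam2]
      abel
    have h3' : (2:R) • q x y = (2:R) • (α*(x*y) + β*(y*x) + lam x*y + lam y*x + gam x y) := by
      rw [h2q, hT]
    calc q x y = (⅟2:R) • ((2:R) • q x y) := (invOf_smul_smul _ _).symm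
    _ = (⅟2:R) • ((2:R) • (α*(x*y) + β*(y*x) + lam x*y + lam y*x + gam x y)) := by rw [h3']
    _ = _ := invOf_smul_smul _ _
  have hassocq : ∀ x y w : G', q (q x y) w = q x (q y w) := by
    intro x y w
    simp only [hqapp, l.symm_apply_apply, mul_assoc]
  -- corner identity, A side
  have cornerA : ∀ (a a' : A') (m : M'),
      ∃ θ₁ θ₂ θ₃ : G', θ₁ ∈ Subring.center G' ∧ θ₂ ∈ Subring.center G' ∧
        θ₃ ∈ Subring.center G' ∧
        (α*β) * (h'.ιA (a*a' - a'*a) * h'.ιM m) = θ₁ * h'.ιA a' + θ₂ * h'.ιA a + θ₃ := by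
    intro a a' m
    set X := h'.ιA a with hXd
    set W := h'.ιA a' with hWd
    set Y := h'.ιM m with hYd
    have hYW : Y * W = 0 := h'.mul_MA m a'
    have hYX : Y * X = 0 := h'.mul_MA m a
    have hXW : X * W = h'.ιA (a*a') := h'.mul_AA a a'
    have hWX : W * X = h'.ιA (a'*a) := h'.mul_AA a' a
    have hXYW : (X*Y)*W = 0 := by
      obtain ⟨k, hk⟩ := h'.mul_AM a m
      rw [← hk, h'.mul_MA]
    have hWYX : (W*Y)*X = 0 := by
      obtain ⟨k, hk⟩ := h'.mul_AM a' m
      rw [← hk, h'.mul_MA]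
    have ht : q X Y = α*(X*Y) + lam X*Y + lam Y*X + gam X Y := by
      rw [hpi X Y, hYX, mul_zero, add_zero]
    have hs : q Y W = β*(W*Y) + lam Y*W + lam W*Y + gam Y W := by
      rw [hpi Y W, hYW, mul_zero, zero_add]
    have h_tW : (q X Y)*W = lam Y*h'.ιA (a*a') + gam X Y*W := by
      rw [ht, add_mul, add_mul, add_mul, mul_assoc α, mul_assoc (lam X), mul_assoc (lam Y),
        hXYW, hYW, hXW, mul_zero, mul_zero, zero_add, zero_add]
    have h_Wt : W*(q X Y) = α*(W*(X*Y)) + lam X*(W*Y) + lam Y*h'.ιA (a'*a) + gam X Y*W := by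
      rw [ht, mul_add, mul_add, mul_add, cswap hαZ W (X*Y), cswap (hlamZ X) W Y,
        cswap (hlamZ Y) W X, hWX, cmul (hgamZ X Y) W]
    have h_lamWt : lam W*(q X Y)
        = α*(lam W*(X*Y)) + lam X*(lam W*Y) + lam Y*(lam W*X) + lam W*gam X Y := by
      rw [ht, mul_add, mul_add, mul_add, cswap hαZ (lam W) (X*Y), cswap (hlamZ X) (lam W) Y,
        cswap (hlamZ Y) (lam W) X]
    have h_Xs : X*(q Y W) = β*(X*(W*Y)) + lam Y*h'.ιA (a*a') + lam W*(X*Y) + gam Y W*X := by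
      rw [hs, mul_add, mul_add, mul_add, cswap hβZ X (W*Y), cswap (hlamZ Y) X W,
        cswap (hlamZ W) X Y, hXW, cmul (hgamZ Y W) X]
    have h_sX : (q Y W)*X = lam Y*h'.ιA (a'*a) + gam Y W*X := by
      rw [hs, add_mul, add_mul, add_mul, mul_assoc β, mul_assoc (lam Y), mul_assoc (lam W),
        hWYX, hWX, hYX, mul_zero, mul_zero, zero_add, add_zero]
    have h_lamXs : lam X*(q Y W)
        = β*(lam X*(W*Y)) + lam X*(lam Y*W) + lam X*(lam W*Y) + lam X*gam Y W := by
      rw [hs, mul_add, mul_add, mul_add, cswap hβZ (lam X) (W*Y)]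
    have hXWY : X*(W*Y) = h'.ιA (a*a') * Y := by rw [← mul_assoc, hXW]
    have hWXY : W*(X*Y) = h'.ιA (a'*a) * Y := by rw [← mul_assoc, hWX]
    refine ⟨α*gam X Y + β*gam X Y + lam (q X Y) - lam X*lam Y,
            lam Y*lam W - α*gam Y W - β*gam Y W - lam (q Y W),
            lam W*gam X Y + gam (q X Y) W - lam X*gam Y W - gam X (q Y W),
            ?_, ?_, ?_, ?_⟩
    · exact Subring.sub_mem _ (Subring.add_mem _ (Subring.add_mem _
        (Subring.mul_mem _ hαZ (hgamZ X Y)) (Subring.mul_mem _ hβZ (hgamZ X Y)))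
        (hlamZ _)) (Subring.mul_mem _ (hlamZ X) (hlamZ Y))
    · exact Subring.sub_mem _ (Subring.sub_mem _ (Subring.sub_mem _
        (Subring.mul_mem _ (hlamZ Y) (hlamZ W)) (Subring.mul_mem _ hαZ (hgamZ Y W)))
        (Subring.mul_mem _ hβZ (hgamZ Y W))) (hlamZ _)
    · exact Subring.sub_mem _ (Subring.sub_mem _ (Subring.add_mem _
        (Subring.mul_mem _ (hlamZ W) (hgamZ X Y)) (hgamZ _ _))
        (Subring.mul_mem _ (hlamZ X) (hgamZ Y W))) (hgamZ _ _)
    · have key := hassocq X Y W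
      rw [hpi (q X Y) W, hpi X (q Y W)] at key
      rw [h_tW, h_Wt, h_lamWt, h_Xs, h_sX, h_lamXs] at key
      rw [hWXY, hXWY] at key
      simp only [mul_add] at key
      rw [cswap hαZ β (h'.ιA (a'*a) * Y)] at key
      have hgoalL : (α*β)*(h'.ιA (a*a'-a'*a)*Y)
          = α*(β*(h'.ιA (a*a')*Y)) - α*(β*(h'.ιA (a'*a)*Y)) := by
        rw [map_sub, sub_mul, mul_sub, mul_assoc, mul_assoc]
      have hθ1 : (α*gam X Y + β*gam X Y + lam (q X Y) - lam X*lam Y)*W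
          = α*(gam X Y*W) + β*(gam X Y*W) + lam (q X Y)*W - lam X*(lam Y*W) := by
        rw [sub_mul, add_mul, add_mul, mul_assoc, mul_assoc, mul_assoc]
      have hθ2 : (lam Y*lam W - α*gam Y W - β*gam Y W - lam (q Y W))*X
          = lam Y*(lam W*X) - α*(gam Y W*X) - β*(gam Y W*X) - lam (q Y W)*X := by
        rw [sub_mul, sub_mul, sub_mul, mul_assoc, mul_assoc, mul_assoc]
      rw [hgoalL, hθ1, hθ2]
      refine eq_of_sub_eq_zero ?_
      rw [← sub_eq_zero_of_eq key.symm]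
      abel
  -- corner identity, B side
  have cornerB : ∀ (b b' : B') (m : M'),
      ∃ θ₁ θ₂ θ₃ : G', θ₁ ∈ Subring.center G' ∧ θ₂ ∈ Subring.center G' ∧
        θ₃ ∈ Subring.center G' ∧
        (α*β) * (h'.ιM m * h'.ιB (b*b' - b'*b)) = θ₁ * h'.ιB b' + θ₂ * h'.ιB b + θ₃ := by
    intro b b' m
    set X := h'.ιB b with hXd
    set W := h'.ιB b' with hWd
    set Y := h'.ιM m with hYd
    have hXY : X * Y = 0 := h'.mul_BM b m
    have hWY : W * Y = 0 := h'.mul_BM b' m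
    have hXW : X * W = h'.ιB (b*b') := h'.mul_BB b b'
    have hWX : W * X = h'.ιB (b'*b) := h'.mul_BB b' b
    have hWYX : W*(Y*X) = 0 := by
      obtain ⟨k, hk⟩ := h'.mul_MB m b
      rw [← hk, h'.mul_BM]
    have hXYW : X*(Y*W) = 0 := by
      obtain ⟨k, hk⟩ := h'.mul_MB m b'
      rw [← hk, h'.mul_BM]
    have ht : q X Y = β*(Y*X) + lam X*Y + lam Y*X + gam X Y := by
      rw [hpi X Y, hXY, mul_zero, zero_add]
    have hs : q Y W = α*(Y*W) + lam Y*W + lam W*Y + gam Y W := by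
      rw [hpi Y W, hWY, mul_zero, add_zero]
    have h_tW : (q X Y)*W = β*(Y*h'.ιB (b*b')) + lam X*(Y*W) + lam Y*h'.ιB (b*b') + gam X Y*W := by
      rw [ht, add_mul, add_mul, add_mul, mul_assoc β, mul_assoc (lam X), mul_assoc (lam Y),
        mul_assoc Y X W, hXW]
    have h_Wt : W*(q X Y) = lam Y*h'.ιB (b'*b) + gam X Y*W := by
      rw [ht, mul_add, mul_add, mul_add, cswap hβZ W (Y*X), hWYX, mul_zero,
        cswap (hlamZ X) W Y, hWY, mul_zero, cswap (hlamZ Y) W X, hWX,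
        cmul (hgamZ X Y) W, zero_add, zero_add]
    have h_lamWt : lam W*(q X Y)
        = β*(lam W*(Y*X)) + lam X*(lam W*Y) + lam Y*(lam W*X) + lam W*gam X Y := by
      rw [ht, mul_add, mul_add, mul_add, cswap hβZ (lam W) (Y*X), cswap (hlamZ X) (lam W) Y,
        cswap (hlamZ Y) (lam W) X]
    have h_Xs : X*(q Y W) = lam Y*h'.ιB (b*b') + gam Y W*X := by
      rw [hs, mul_add, mul_add, mul_add, cswap hαZ X (Y*W), hXYW, mul_zero,
        cswap (hlamZ Y) X W, hXW, cswap (hlamZ W) X Y, hXY, mul_zero,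
        cmul (hgamZ Y W) X, zero_add, add_zero]
    have h_sX : (q Y W)*X = α*(Y*h'.ιB (b'*b)) + lam Y*h'.ιB (b'*b) + lam W*(Y*X) + gam Y W*X := by
      rw [hs, add_mul, add_mul, add_mul, mul_assoc α, mul_assoc (lam Y), mul_assoc (lam W),
        mul_assoc Y W X, hWX]
    have h_lamXs : lam X*(q Y W)
        = α*(lam X*(Y*W)) + lam X*(lam Y*W) + lam X*(lam W*Y) + lam X*gam Y W := by
      rw [hs, mul_add, mul_add, mul_add, cswap hαZ (lam X) (Y*W)]
    refine ⟨lam X*lam Y - α*gam X Y - β*gam X Y - lam (q X Y),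
            α*gam Y W + β*gam Y W + lam (q Y W) - lam Y*lam W,
            lam X*gam Y W + gam X (q Y W) - lam W*gam X Y - gam (q X Y) W,
            ?_, ?_, ?_, ?_⟩
    · exact Subring.sub_mem _ (Subring.sub_mem _ (Subring.sub_mem _
        (Subring.mul_mem _ (hlamZ X) (hlamZ Y)) (Subring.mul_mem _ hαZ (hgamZ X Y)))
        (Subring.mul_mem _ hβZ (hgamZ X Y))) (hlamZ _)
    · exact Subring.sub_mem _ (Subring.add_mem _ (Subring.add_mem _
        (Subring.mul_mem _ hαZ (hgamZ Y W)) (Subring.mul_mem _ hβZ (hgamZ Y W)))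
        (hlamZ _)) (Subring.mul_mem _ (hlamZ Y) (hlamZ W))
    · exact Subring.sub_mem _ (Subring.sub_mem _ (Subring.add_mem _
        (Subring.mul_mem _ (hlamZ X) (hgamZ Y W)) (hgamZ _ _))
        (Subring.mul_mem _ (hlamZ W) (hgamZ X Y))) (hgamZ _ _)
    · have key := hassocq X Y W
      rw [hpi (q X Y) W, hpi X (q Y W)] at key
      rw [h_tW, h_Wt, h_lamWt, h_Xs, h_sX, h_lamXs] at key
      simp only [mul_add] at key
      rw [cswap hαZ β (Y*h'.ιB (b'*b))] at key
      have hgoalL : (α*β)*(Y*h'.ιB (b*b'-b'*b))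
          = α*(β*(Y*h'.ιB (b*b'))) - α*(β*(Y*h'.ιB (b'*b))) := by
        rw [map_sub, mul_sub Y, mul_sub, mul_assoc, mul_assoc]
      have hθ1 : (lam X*lam Y - α*gam X Y - β*gam X Y - lam (q X Y))*W
          = lam X*(lam Y*W) - α*(gam X Y*W) - β*(gam X Y*W) - lam (q X Y)*W := by
        rw [sub_mul, sub_mul, sub_mul, mul_assoc, mul_assoc, mul_assoc]
      have hθ2 : (α*gam Y W + β*gam Y W + lam (q Y W) - lam Y*lam W)*X
          = α*(gam Y W*X) + β*(gam Y W*X) + lam (q Y W)*X - lam Y*(lam W*X) := by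
        rw [sub_mul, add_mul, add_mul, mul_assoc, mul_assoc, mul_assoc]
      rw [hgoalL, hθ1, hθ2]
      refine eq_of_sub_eq_zero ?_
      rw [← sub_eq_zero_of_eq key]
      abel
  have hEZ : α*β ∈ Subring.center G' := Subring.mul_mem _ hαZ hβZ
  have hE0 : α*β = 0 := by
    by_contra hE
    rcases h2' with ⟨a, a', hne⟩ | ⟨b, b', hne⟩
    · have hall : ∀ m : M', (α*β) * (h'.ιA (a*a' - a'*a) * h'.ιM m) = 0 := by
        intro m
        obtain ⟨θ₁, θ₂, θ₃, hθ₁, hθ₂, hθ₃, hkey⟩ := cornerA a a' m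
        obtain ⟨k, hk⟩ := h'.mul_AM (a*a'-a'*a) m
        rw [← hk] at hkey ⊢
        have h6 := congrArg h'.pM hkey
        rw [map_add, map_add, h'.pM_central_mul_ιA hθ₁, h'.pM_central_mul_ιA hθ₂,
          h'.pM_central hθ₃, add_zero, add_zero] at h6
        rw [h'.central_mul_ιM_eq hEZ k, h6, map_zero]
      have := annA h' h3 hEZ hE hall
      exact hne (by rwa [sub_eq_zero] at this)
    · have hall : ∀ m : M', (α*β) * (h'.ιM m * h'.ιB (b*b' - b'*b)) = 0 := by
        intro m
        obtain ⟨θ₁, θ₂, θ₃, hθ₁, hθ₂, hθ₃, hkey⟩ := cornerB b b' m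
        obtain ⟨k, hk⟩ := h'.mul_MB m (b*b'-b'*b)
        rw [← hk] at hkey ⊢
        have h6 := congrArg h'.pM hkey
        rw [map_add, map_add, h'.pM_central_mul_ιB hθ₁, h'.pM_central_mul_ιB hθ₂,
          h'.pM_central hθ₃, add_zero, add_zero] at h6
        rw [h'.central_mul_ιM_eq hEZ k, h6, map_zero]
      have := annB h' h3 hEZ hE hall
      exact hne (by rwa [sub_eq_zero] at this)
  -- z is a square root of 1
  have hz2 : z*z = 1 := by
    have h4 : (2:R)•((2:R)•(α*β)) = z*z - 1 := by
      calc (2:R)•((2:R)•(α*β)) = (2:R)•(α*((2:R)•β)) := by rw [mul_smul_comm]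
      _ = ((2:R)•α)*((2:R)•β) := by rw [smul_mul_assoc]
      _ = (z+1)*(z-1) := by rw [h2α, h2β]
      _ = z*z - 1 := by rw [add_mul, one_mul, mul_sub, mul_one]; abel
    rw [hE0, smul_zero, smul_zero] at h4
    have h5 := h4.symm
    rwa [sub_eq_zero] at h5
  have hfact : (z - 1)*(z + 1) = 0 := by
    rw [sub_mul, mul_add, one_mul, mul_one, hz2]
    abel
  -- generic: central-valued multiplication defects vanish
  have deltazero : ∀ (mf : G → G') (δ : G → G → G'),
      (∀ u v, δ u v ∈ Subring.center G') →
      (∀ g : G', ∃ u ξ, ξ ∈ Subring.center G' ∧ g = mf u + ξ) →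
      (∀ u v w : G, ∃ ζ, ζ ∈ Subring.center G' ∧ δ v w * mf u = δ u v * mf w + ζ) →
      ∀ v w, δ v w = 0 := by
    intro mf δ hδZ hrep hrel v w
    have hDZ := hδZ v w
    have hrep2 : ∀ g : G', ∃ ζ ξ, ζ ∈ Subring.center G' ∧ ξ ∈ Subring.center G' ∧
        δ v w * g = ζ * mf w + ξ := by
      intro g
      obtain ⟨u, ξ₀, hξ₀, hgu⟩ := hrep g
      obtain ⟨ζ₀, hζ₀, hline⟩ := hrel u v w
      exact ⟨δ u v, ζ₀ + δ v w * ξ₀, hδZ u v,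
        Subring.add_mem _ hζ₀ (Subring.mul_mem _ hDZ hξ₀),
        by rw [hgu, mul_add, hline, add_assoc]⟩
    obtain ⟨ζ₁, ξ₁, hζ₁, hξ₁, e₁⟩ := hrep2 g₁
    obtain ⟨ζ₂, ξ₂, hζ₂, hξ₂, e₂⟩ := hrep2 g₂
    have hDD : (δ v w * δ v w) * (g₁*g₂ - g₂*g₁) = 0 := by
      have k1 : (δ v w * g₁)*(δ v w * g₂) = (δ v w * δ v w)*(g₁*g₂) := by
        rw [mul_assoc, cswap hDZ g₁ g₂, ← mul_assoc]
      have k2 : (δ v w * g₂)*(δ v w * g₁) = (δ v w * δ v w)*(g₂*g₁) := by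
        rw [mul_assoc, cswap hDZ g₂ g₁, ← mul_assoc]
      rw [mul_sub, ← k1, ← k2, e₁, e₂, affine_comm (mf w) hζ₁ hζ₂ hξ₁ hξ₂, sub_self]
    have hDD0 : δ v w * δ v w = 0 := hcp _ (Subring.mul_mem _ hDZ hDZ) hDD
    rcases cdomain h' h3 hDZ hDZ hDD0 with h0 | h0 <;> exact h0
  -- generic: a central element with central multiples is zero
  have central_ann : ∀ k : G', k ∈ Subring.center G' →
      (∀ g : G', k * g ∈ Subring.center G') → k = 0 := by
    intro k hkZ hkmul
    apply hcp k hkZ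
    have h1 : k*(g₁*g₂) = k*(g₂*g₁) := by
      rw [← mul_assoc, ← cmul (hkmul g₁) g₂, cswap hkZ g₂ g₁]
    rw [mul_sub, h1, sub_self]
  have hl1Z : (l 1 : G') ∈ Subring.center G' := by
    rw [Subring.mem_center_iff]
    intro g
    have h0 := hLie 1 (l.symm g)
    rw [one_mul, mul_one, sub_self, map_zero, l.apply_symm_apply] at h0
    have h1 := h0.symm
    rw [sub_eq_zero] at h1
    exact h1.symm
  have hker_gen : ∀ u : G, (∀ v : G, l (u*v) ∈ Subring.center G') → u = 0 := by
    intro u hu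
    have hZG : ∀ v : G, u*v ∈ Subring.center G := by
      intro v
      rw [Subring.mem_center_iff]
      intro g
      have h0 : l ((u*v)*g - g*(u*v)) = 0 := by
        rw [hLie, cmul (hu v) (l g), sub_self]
      have h1 : (u*v)*g - g*(u*v) = 0 := by
        apply l.injective
        rw [h0, map_zero]
      rw [sub_eq_zero] at h1
      exact h1.symm
    have hu_c : u ∈ Subring.center G := by
      have := hZG 1
      rwa [mul_one] at this
    apply h.central_eq_zero_of_pA hu_c
    apply h.faithful_left
    intro m0
    rw [← h.central_mul_ιM hu_c m0, h.central_mul_ιM_eq hu_c m0, h.pM_central (hZG _), map_zero]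
  rcases cdomain h' h3 (Subring.sub_mem _ hzZ (Subring.one_mem _))
      (Subring.add_mem _ hzZ (Subring.one_mem _)) hfact with h8 | h8
  · -- z = 1 : m is multiplicative
    have hz1 : z = 1 := by rwa [sub_eq_zero] at h8
    have halpha : α = 1 := by
      have h9 := h2α
      rw [hz1] at h9
      have h10 : (2:R)•α = (2:R)•(1:G') := by rw [h9, two_smul]
      calc α = (⅟2:R)•((2:R)•α) := (invOf_smul_smul _ _).symm
      _ = (⅟2:R)•((2:R)•(1:G')) := by rw [h10]
      _ = 1 := invOf_smul_smul _ _
    have hbeta : β = 0 := by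
      have h9 := h2β
      rw [hz1, sub_self] at h9
      calc β = (⅟2:R)•((2:R)•β) := (invOf_smul_smul _ _).symm
      _ = (⅟2:R)•(0:G') := by rw [h9]
      _ = 0 := smul_zero _
    have hpi1 : ∀ x y : G', q x y = x*y + lam x*y + lam y*x + gam x y := by
      intro x y
      rw [hpi, halpha, hbeta, one_mul, zero_mul, add_zero]
    have hlam_eq : ∀ x, lam x = (⅟2:R) • μ x := by
      intro x
      calc lam x = (⅟2:R)•((2:R)•lam x) := (invOf_smul_smul _ _).symm
      _ = (⅟2:R)•μ x := by rw [hlam2]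
    set mm : G →ₗ[R] G' := (l : G →ₗ[R] G') + (⅟2:R) • (μ ∘ₗ (l : G →ₗ[R] G')) with hmmd
    set nm : G →ₗ[R] G' := -((⅟2:R) • (μ ∘ₗ (l : G →ₗ[R] G'))) with hnmd
    have hmm_app : ∀ u : G, mm u = l u + lam (l u) := by
      intro u
      rw [hmmd, hlam_eq]
      simp [LinearMap.add_apply, LinearMap.smul_apply, LinearMap.comp_apply]
    have hnm_app : ∀ u : G, nm u = -lam (l u) := by
      intro u
      rw [hnmd, hlam_eq]
      simp [LinearMap.neg_apply, LinearMap.smul_apply, LinearMap.comp_apply]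
    have hlmn : ∀ u : G, l u = mm u + nm u := by
      intro u
      rw [hmm_app, hnm_app]
      abel
    have hnmZ : ∀ u : G, nm u ∈ Subring.center G' := by
      intro u
      rw [hnm_app]
      exact Subring.neg_mem _ (hlamZ _)
    have hql : ∀ u v : G, l (u*v) = q (l u) (l v) := by
      intro u v
      rw [hqapp, l.symm_apply_apply, l.symm_apply_apply]
    have hrep : ∀ g : G', ∃ u ξ, ξ ∈ Subring.center G' ∧ g = mm u + ξ := fun g =>
      ⟨l.symm g, nm (l.symm g), hnmZ _, by rw [← hlmn, l.apply_symm_apply]⟩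
    have hδZ : ∀ u v : G, mm (u*v) - mm u*mm v ∈ Subring.center G' := by
      intro u v
      have em : mm (u*v) = q (l u) (l v) + lam (q (l u) (l v)) := by
        rw [hmm_app, hql]
      have hLqZ := hlamZ (q (l u) (l v))
      rw [em, hmm_app u, hmm_app v]
      set Lq := lam (q (l u) (l v)) with hLqd
      rw [hpi1 (l u) (l v)]
      have hid : (l u*l v + lam (l u)*l v + lam (l v)*l u + gam (l u) (l v) + Lq)
          - (l u + lam (l u))*(l v + lam (l v))
          = gam (l u) (l v) + Lq - lam (l u)*lam (l v) := by
        simp only [mul_add, add_mul]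
        rw [cmul (hlamZ (l v)) (l u)]
        abel
      rw [hid]
      exact Subring.sub_mem _ (Subring.add_mem _ (hgamZ _ _) hLqZ)
        (Subring.mul_mem _ (hlamZ _) (hlamZ _))
    have hrel1 : ∀ u v w : G, ∃ ζ, ζ ∈ Subring.center G' ∧
        (mm (v*w) - mm v*mm w)*mm u = (mm (u*v) - mm u*mm v)*mm w + ζ := by
      intro u v w
      refine ⟨mm ((u*v)*w) - mm (u*v)*mm w - (mm (u*(v*w)) - mm u*mm (v*w)),
        Subring.sub_mem _ (hδZ (u*v) w) (hδZ u (v*w)), ?_⟩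
      rw [← cmul (hδZ v w) (mm u)]
      have hass : mm ((u*v)*w) = mm (u*(v*w)) := by rw [mul_assoc]
      rw [hass]
      simp only [mul_sub, sub_mul, mul_assoc]
      abel
    have hδ0 := deltazero (fun u => mm u) (fun u v => mm (u*v) - mm u*mm v) hδZ hrep hrel1
    have hmul : ∀ u v : G, mm (u*v) = mm u*mm v := by
      intro u v
      have h9 := hδ0 u v
      rwa [sub_eq_zero] at h9
    have mm1Z : mm 1 ∈ Subring.center G' := by
      have h9 := hmm_app 1
      rw [h9]
      exact Subring.add_mem _ hl1Z (hlamZ _)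
    have hm1 : mm 1 = 1 := by
      have hk0 : (1 : G') - mm 1 = 0 := by
        apply central_ann _ (Subring.sub_mem _ (Subring.one_mem _) mm1Z)
        intro g
        obtain ⟨u, ξ, hξ, hgu⟩ := hrep g
        have h9 : ((1:G') - mm 1)*g = ((1:G') - mm 1)*ξ := by
          rw [hgu, mul_add]
          have h10 : ((1:G') - mm 1)*mm u = 0 := by
            rw [sub_mul, one_mul, ← cmul mm1Z (mm u), ← hmul, mul_one, sub_self]
          rw [h10, zero_add]
        rw [h9]
        exact Subring.mul_mem _ (Subring.sub_mem _ (Subring.one_mem _) mm1Z) hξ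
      have h9 := hk0
      rw [sub_eq_zero] at h9
      exact h9.symm
    have hinj : Function.Injective mm := by
      have hker : ∀ u : G, mm u = 0 → u = 0 := by
        intro u hu
        apply hker_gen
        intro v
        have h9 : l (u*v) = mm (u*v) + nm (u*v) := hlmn _
        rw [h9, hmul, hu, zero_mul, zero_add]
        exact hnmZ _
      intro u₁ u₂ he
      have h9 : mm (u₁ - u₂) = 0 := by rw [map_sub, he, sub_self]
      have h10 := hker _ h9
      rwa [sub_eq_zero] at h10
    have hnmcomm : ∀ u v : G, nm (u*v - v*u) = 0 := by
      intro u v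
      have h9 : l (u*v - v*u) = mm u*mm v - mm v*mm u := by
        rw [hLie, hlmn u, hlmn v]
        exact commutator_add_central (mm u) (mm v) (hnmZ u) (hnmZ v)
      have h10 : mm (u*v - v*u) = mm u*mm v - mm v*mm u := by
        rw [map_sub, hmul, hmul]
      have h11 := hlmn (u*v - v*u)
      rw [h9, h10] at h11
      exact (left_eq_add.mp h11)
    have hsurjc : (Subring.center G' : Set G') = Set.range (algebraMap R G') →
        Function.Surjective mm := by
      intro hZ g
      obtain ⟨u, ξ, hξ, hgu⟩ := hrep g
      have h9 : ξ ∈ Set.range (algebraMap R G') := by rw [← hZ]; exact hξ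
      obtain ⟨r, hr⟩ := h9
      refine ⟨u + r • 1, ?_⟩
      rw [map_add, map_smul, hm1, hgu, ← hr, Algebra.algebraMap_eq_smul_one]
    exact ⟨mm, nm, hlmn, hinj, Or.inl hmul, hnmZ, hnmcomm, hsurjc⟩
  · -- z = -1 : m is the negative of an anti-homomorphism
    have hzneg : z = -1 := eq_neg_of_add_eq_zero_left h8
    have halpha : α = 0 := by
      have h9 := h2α
      rw [hzneg, neg_add_cancel] at h9
      calc α = (⅟2:R)•((2:R)•α) := (invOf_smul_smul _ _).symm
      _ = (⅟2:R)•(0:G') := by rw [h9]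
      _ = 0 := smul_zero _
    have hbeta : β = -1 := by
      have h9 := h2β
      rw [hzneg] at h9
      have h10 : (2:R)•β = (2:R)•(-1:G') := by rw [h9, two_smul]; abel
      calc β = (⅟2:R)•((2:R)•β) := (invOf_smul_smul _ _).symm
      _ = (⅟2:R)•((2:R)•(-1:G')) := by rw [h10]
      _ = -1 := invOf_smul_smul _ _
    have hpi2 : ∀ x y : G', q x y = -(y*x) + lam x*y + lam y*x + gam x y := by
      intro x y
      rw [hpi, halpha, hbeta, zero_mul, zero_add, neg_one_mul]
    have hlam_eq : ∀ x, lam x = (⅟2:R) • μ x := by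
      intro x
      calc lam x = (⅟2:R)•((2:R)•lam x) := (invOf_smul_smul _ _).symm
      _ = (⅟2:R)•μ x := by rw [hlam2]
    set mm : G →ₗ[R] G' := (l : G →ₗ[R] G') - (⅟2:R) • (μ ∘ₗ (l : G →ₗ[R] G')) with hmmd
    set nm : G →ₗ[R] G' := (⅟2:R) • (μ ∘ₗ (l : G →ₗ[R] G')) with hnmd
    have hnm_app : ∀ u : G, nm u = lam (l u) := by
      intro u
      rw [hnmd, hlam_eq]
      simp [LinearMap.smul_apply, LinearMap.comp_apply]
    have hmm_app : ∀ u : G, mm u = l u - lam (l u) := by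
      intro u
      rw [hmmd]
      simp only [LinearMap.sub_apply, LinearEquiv.coe_coe]
      rw [hnm_app u]
    have hlmn : ∀ u : G, l u = mm u + nm u := by
      intro u
      rw [hmm_app, hnm_app]
      abel
    have hnmZ : ∀ u : G, nm u ∈ Subring.center G' := by
      intro u
      rw [hnm_app]
      exact hlamZ _
    have hql : ∀ u v : G, l (u*v) = q (l u) (l v) := by
      intro u v
      rw [hqapp, l.symm_apply_apply, l.symm_apply_apply]
    have hrep : ∀ g : G', ∃ u ξ, ξ ∈ Subring.center G' ∧ g = mm u + ξ := fun g =>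
      ⟨l.symm g, nm (l.symm g), hnmZ _, by rw [← hlmn, l.apply_symm_apply]⟩
    have hδZ2 : ∀ u v : G, mm (u*v) + mm v*mm u ∈ Subring.center G' := by
      intro u v
      have em : mm (u*v) = q (l u) (l v) - lam (q (l u) (l v)) := by
        rw [hmm_app, hql]
      have hLqZ := hlamZ (q (l u) (l v))
      rw [em, hmm_app v, hmm_app u]
      set Lq := lam (q (l u) (l v)) with hLqd
      rw [hpi2 (l u) (l v)]
      have hid : (-(l v*l u) + lam (l u)*l v + lam (l v)*l u + gam (l u) (l v) - Lq)
          + (l v - lam (l v))*(l u - lam (l u))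
          = gam (l u) (l v) - Lq + lam (l v)*lam (l u) := by
        simp only [mul_sub, sub_mul]
        rw [cmul (hlamZ (l u)) (l v)]
        abel
      rw [hid]
      exact Subring.add_mem _ (Subring.sub_mem _ (hgamZ _ _) hLqZ)
        (Subring.mul_mem _ (hlamZ _) (hlamZ _))
    have hrel2 : ∀ u v w : G, ∃ ζ, ζ ∈ Subring.center G' ∧
        (mm (v*w) + mm w*mm v)*mm u = (mm (u*v) + mm v*mm u)*mm w + ζ := by
      intro u v w
      refine ⟨(mm (u*(v*w)) + mm (v*w)*mm u) - (mm ((u*v)*w) + mm w*mm (u*v)),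
        Subring.sub_mem _ (hδZ2 u (v*w)) (hδZ2 (u*v) w), ?_⟩
      rw [← cmul (hδZ2 u v) (mm w)]
      have hass : mm ((u*v)*w) = mm (u*(v*w)) := by rw [mul_assoc]
      rw [hass]
      simp only [add_mul, mul_add, mul_assoc]
      abel
    have hδ0 := deltazero (fun u => mm u) (fun u v => mm (u*v) + mm v*mm u) hδZ2 hrep hrel2
    have hanti : ∀ u v : G, mm (u*v) = -(mm v*mm u) := by
      intro u v
      exact eq_neg_of_add_eq_zero_left (hδ0 u v)
    have mm1Z : mm 1 ∈ Subring.center G' := by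
      have h9 := hmm_app 1
      rw [h9]
      exact Subring.sub_mem _ hl1Z (hlamZ _)
    have hm1 : mm 1 = -1 := by
      have hk0 : (1 : G') + mm 1 = 0 := by
        apply central_ann _ (Subring.add_mem _ (Subring.one_mem _) mm1Z)
        intro g
        obtain ⟨u, ξ, hξ, hgu⟩ := hrep g
        have h9 : ((1:G') + mm 1)*g = ((1:G') + mm 1)*ξ := by
          rw [hgu, mul_add]
          have h10 : ((1:G') + mm 1)*mm u = 0 := by
            have h11 := hanti u 1
            rw [mul_one] at h11
            rw [add_mul, one_mul]
            nth_rewrite 1 [h11]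
            exact neg_add_cancel _
          rw [h10, zero_add]
        rw [h9]
        exact Subring.mul_mem _ (Subring.add_mem _ (Subring.one_mem _) mm1Z) hξ
      exact eq_neg_of_add_eq_zero_right hk0
    have hinj : Function.Injective mm := by
      have hker : ∀ u : G, mm u = 0 → u = 0 := by
        intro u hu
        apply hker_gen
        intro v
        have h9 : l (u*v) = mm (u*v) + nm (u*v) := hlmn _
        rw [h9, hanti, hu, mul_zero, neg_zero, zero_add]
        exact hnmZ _
      intro u₁ u₂ he
      have h9 : mm (u₁ - u₂) = 0 := by rw [map_sub, he, sub_self]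
      have h10 := hker _ h9
      rwa [sub_eq_zero] at h10
    have hnmcomm : ∀ u v : G, nm (u*v - v*u) = 0 := by
      intro u v
      have h9 : l (u*v - v*u) = mm u*mm v - mm v*mm u := by
        rw [hLie, hlmn u, hlmn v]
        exact commutator_add_central (mm u) (mm v) (hnmZ u) (hnmZ v)
      have h10 : mm (u*v - v*u) = mm u*mm v - mm v*mm u := by
        rw [map_sub, hanti, hanti]
        abel
      have h11 := hlmn (u*v - v*u)
      rw [h9, h10] at h11
      exact (left_eq_add.mp h11)
    have hsurjc : (Subring.center G' : Set G') = Set.range (algebraMap R G') →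
        Function.Surjective mm := by
      intro hZ g
      obtain ⟨u, ξ, hξ, hgu⟩ := hrep g
      have h9 : ξ ∈ Set.range (algebraMap R G') := by rw [← hZ]; exact hξ
      obtain ⟨r, hr⟩ := h9
      refine ⟨u + (-r) • 1, ?_⟩
      rw [map_add, map_smul, hm1, hgu, ← hr, Algebra.algebraMap_eq_smul_one]
      rw [smul_neg, neg_smul, neg_neg]
    exact ⟨mm, nm, hlmn, hinj, Or.inr hanti, hnmZ, hnmcomm, hsurjc⟩
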